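/- Let C(k) be the quiver on the vertex set Z_2^k (vertices of the k-dimensional cube) with a pair of opposite arrows for each edge, and let A(k) be the quotient of its path algebra by identifying any two paths with the same endpoints whose multisets of colors agree, where parallel edges share a color. Then the category of Z-graded A(k)-modules is equivalent to the category of (Z_2^k × Z)-graded modules over the polynomial ring C[x_1,...,x_k], where deg x_i = (δ_i, 1). -/

import Mathlib

open CategoryTheory

/-- The group `G_k = (ℤ/2)^k`, the vertex set of the `k`-cube quiver `C(k)`. -/
abbrev Gk (k : ℕ) := Fin k → ZMod 2

/-- The standard basis vector `δ i` of `G_k`. -/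
def deltaG (k : ℕ) (i : Fin k) : Gk k := Pi.single i 1

/-- Generators of the path algebra of `C(k)`: a vertex idempotent `e v` for each
vertex `v`, and an arrow `a i v : v → v + δ i` of color `i` for each vertex `v`. -/
inductive AkGen (k : ℕ)
  | e : Gk k → AkGen k
  | a : Fin k → Gk k → AkGen k

abbrev FAk (k : ℕ) := FreeAlgebra ℂ (AkGen k)

noncomputable def eF (k : ℕ) (v : Gk k) : FAk k := FreeAlgebra.ι ℂ (AkGen.e v)

noncomputable def aF (k : ℕ) (i : Fin k) (v : Gk k) : FAk k :=
  FreeAlgebra.ι ℂ (AkGen.a i v)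

/-- The defining relations of `A(k)`: the path algebra relations of the quiver
`C(k)` (orthogonal idempotents summing to 1, source/target relations for arrows)
together with the identification of any two paths with the same endpoints and the
same multiset of colors (generated by the commutation of the squares of `C(k)`). -/
inductive AkRel (k : ℕ) : FAk k → FAk k → Prop
  | idem (v : Gk k) : AkRel k (eF k v * eF k v) (eF k v)
  | orth (v w : Gk k) : v ≠ w → AkRel k (eF k v * eF k w) 0
  | unit : AkRel k (∑ v : Gk k, eF k v) 1
  | src (i : Fin k) (v : Gk k) : AkRel k (aF k i v * eF k v) (aF k i v)
  | tgt (i : Fin k) (v : Gk k) :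
      AkRel k (eF k (v + deltaG k i) * aF k i v) (aF k i v)
  | comm (i j : Fin k) (v : Gk k) :
      AkRel k (aF k i (v + deltaG k j) * aF k j v)
        (aF k j (v + deltaG k i) * aF k i v)

/-- The algebra `A(k)`. -/
noncomputable abbrev Ak (k : ℕ) := RingQuot (AkRel k)

noncomputable def eA (k : ℕ) (v : Gk k) : Ak k :=
  RingQuot.mkAlgHom ℂ (AkRel k) (eF k v)

noncomputable def aA (k : ℕ) (i : Fin k) (v : Gk k) : Ak k :=
  RingQuot.mkAlgHom ℂ (AkRel k) (aF k i v)

/-- A ℤ-graded `A(k)`-module: an `A(k)`-module with an internal ℤ-grading by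
ℂ-subspaces, compatible with the grading of `A(k)` in which the vertex idempotents
have degree 0 and the arrows degree 1 (path length). -/
structure GrAkMod (k : ℕ) where
  M : Type
  [acg : AddCommGroup M]
  [modC : Module ℂ M]
  [modA : Module (Ak k) M]
  [tower : IsScalarTower ℂ (Ak k) M]
  gr : ℤ → Submodule ℂ M
  internal : DirectSum.IsInternal gr
  compat_e : ∀ (v : Gk k) (n : ℤ), ∀ m ∈ gr n, eA k v • m ∈ gr n
  compat_a : ∀ (i : Fin k) (v : Gk k) (n : ℤ), ∀ m ∈ gr n, aA k i v • m ∈ gr (n + 1)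

attribute [instance] GrAkMod.acg GrAkMod.modC GrAkMod.modA GrAkMod.tower

noncomputable instance (k : ℕ) : Category (GrAkMod k) where
  Hom X Y := {f : X.M →ₗ[Ak k] Y.M // ∀ n : ℤ, ∀ m ∈ X.gr n, f m ∈ Y.gr n}
  id X := ⟨LinearMap.id, fun _ _ hm => hm⟩
  comp f g := ⟨g.1.comp f.1, fun n m hm => g.2 n _ (f.2 n m hm)⟩
  id_comp f := Subtype.ext (LinearMap.comp_id f.1)
  comp_id f := Subtype.ext (LinearMap.id_comp f.1)
  assoc f g h := rfl

/-- A `(G_k × ℤ)`-graded module over `ℂ[x_1,...,x_k]`, where `deg x_i = (δ i, 1)`: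
a `ℂ[x_1,...,x_k]`-module with an internal `(G_k × ℤ)`-grading by ℂ-subspaces such
that multiplication by `x i` maps the `(g, n)`-component into the
`(g + δ i, n + 1)`-component. -/
structure GrPolyMod (k : ℕ) where
  M : Type
  [acg : AddCommGroup M]
  [modC : Module ℂ M]
  [modP : Module (MvPolynomial (Fin k) ℂ) M]
  [tower : IsScalarTower ℂ (MvPolynomial (Fin k) ℂ) M]
  gr : Gk k × ℤ → Submodule ℂ M
  internal : DirectSum.IsInternal gr
  compat : ∀ (i : Fin k) (g : Gk k) (n : ℤ), ∀ m ∈ gr (g, n),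
    (MvPolynomial.X i : MvPolynomial (Fin k) ℂ) • m ∈ gr (g + deltaG k i, n + 1)

attribute [instance] GrPolyMod.acg GrPolyMod.modC GrPolyMod.modP GrPolyMod.tower

noncomputable instance (k : ℕ) : Category (GrPolyMod k) where
  Hom X Y := {f : X.M →ₗ[MvPolynomial (Fin k) ℂ] Y.M //
    ∀ p : Gk k × ℤ, ∀ m ∈ X.gr p, f m ∈ Y.gr p}
  id X := ⟨LinearMap.id, fun _ _ hm => hm⟩
  comp f g := ⟨g.1.comp f.1, fun p m hm => g.2 p _ (f.2 p m hm)⟩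
  id_comp f := Subtype.ext (LinearMap.comp_id f.1)
  comp_id f := Subtype.ext (LinearMap.id_comp f.1)
  assoc f g h := rfl
/-! ### Auxiliary development for the proof -/

noncomputable section AkEquivProof

open DirectSum

namespace AkEquivProof

abbrev Pk (k : ℕ) := MvPolynomial (Fin k) ℂ

/-! #### Projections attached to an internal direct sum decomposition -/

section Proj

variable {M N : Type} [AddCommGroup M] [Module ℂ M] [AddCommGroup N] [Module ℂ N]
variable {ι κ : Type} [DecidableEq ι] [DecidableEq κ]

theorem coeLinearMap_surj (gr : ι → Submodule ℂ M) (h3 : ⨆ p, gr p = ⊤) :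
    Function.Surjective (DirectSum.coeLinearMap gr) := by
  rw [← LinearMap.range_eq_top, DirectSum.range_coeLinearMap, h3]

/-- Two `ℂ`-linear maps agreeing on every graded piece of an internal decomposition agree. -/
theorem ext_of_internal (gr : ι → Submodule ℂ M) (internal : DirectSum.IsInternal gr)
    {f g : M →ₗ[ℂ] N} (h : ∀ p, ∀ m ∈ gr p, f m = g m) : f = g := by
  have key : f ∘ₗ DirectSum.coeLinearMap gr = g ∘ₗ DirectSum.coeLinearMap gr := by
    refine DirectSum.linearMap_ext _ fun p => LinearMap.ext fun x => ?_
    simp only [LinearMap.comp_apply, DirectSum.lof_eq_of, DirectSum.coeLinearMap_of]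
    exact h p x x.2
  ext m
  obtain ⟨x, rfl⟩ := coeLinearMap_surj gr internal.submodule_iSup_eq_top m
  exact LinearMap.congr_fun key x

/-- The projection onto the sum of the graded pieces lying in the fiber of `t` under `c`. -/
def fproj (gr : ι → Submodule ℂ M) (internal : DirectSum.IsInternal gr) (c : ι → κ) (t : κ) :
    M →ₗ[ℂ] M :=
  DirectSum.coeLinearMap gr ∘ₗ
    (DirectSum.toModule ℂ ι _ fun p =>
      if c p = t then DirectSum.lof ℂ ι (fun q => ↥(gr q)) p else 0) ∘ₗ
    ((LinearEquiv.ofBijective (DirectSum.coeLinearMap gr) internal).symm :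
      M →ₗ[ℂ] ⨁ i, gr i)

theorem decompose_of_mem (gr : ι → Submodule ℂ M) (internal : DirectSum.IsInternal gr)
    {p : ι} {m : M} (hm : m ∈ gr p) :
    (LinearEquiv.ofBijective (DirectSum.coeLinearMap gr) internal).symm m
      = DirectSum.lof ℂ ι (fun q => ↥(gr q)) p ⟨m, hm⟩ := by
  rw [LinearEquiv.symm_apply_eq]
  show m = DirectSum.coeLinearMap gr _
  rw [DirectSum.lof_eq_of,
    DirectSum.coeLinearMap_of]

theorem fproj_of_mem (gr : ι → Submodule ℂ M) (internal : DirectSum.IsInternal gr)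
    (c : ι → κ) (t : κ) {p : ι} {m : M} (hm : m ∈ gr p) :
    fproj gr internal c t m = if c p = t then m else 0 := by
  unfold fproj
  simp only [LinearMap.coe_comp, Function.comp_apply, LinearEquiv.coe_coe]
  rw [decompose_of_mem gr internal hm, DirectSum.toModule_lof]
  split_ifs
  · rw [DirectSum.lof_eq_of, DirectSum.coeLinearMap_of]
  · simp

theorem fproj_sum (gr : ι → Submodule ℂ M) (internal : DirectSum.IsInternal gr)
    (c : ι → κ) [Fintype κ] : ∑ t : κ, fproj gr internal c t = LinearMap.id :=
  ext_of_internal gr internal fun p m hm => by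
    rw [LinearMap.sum_apply]
    simp only [fproj_of_mem gr internal c _ hm]
    simp

/-- A criterion for internality of a family of submodules in terms of a system of
"projections". -/
theorem isInternal_of_projections (gr : ι → Submodule ℂ M) (ρ : ι → M →ₗ[ℂ] M)
    (h1 : ∀ p, ∀ m ∈ gr p, ρ p m = m)
    (h2 : ∀ p q, p ≠ q → ∀ m ∈ gr q, ρ p m = 0)
    (h3 : ⨆ p, gr p = ⊤) : DirectSum.IsInternal gr := by
  have hcoe : ⇑(DirectSum.coeAddMonoidHom gr) = ⇑(DirectSum.coeLinearMap gr) := rfl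
  constructor
  · rw [injective_iff_map_eq_zero]
    intro x hx
    have hx' : DirectSum.coeLinearMap gr x = 0 := by rw [← hcoe]; exact hx
    refine DFinsupp.ext fun p => ?_
    have key : (gr p).subtype ∘ₗ (DirectSum.component ℂ ι (fun q => ↥(gr q)) p) =
        (ρ p) ∘ₗ DirectSum.coeLinearMap gr := by
      refine DirectSum.linearMap_ext _ fun q => LinearMap.ext fun y => ?_
      simp only [LinearMap.comp_apply, DirectSum.lof_eq_of, DirectSum.coeLinearMap_of]
      rcases eq_or_ne q p with rfl | hqp
      · rw [h1 q (y : M) y.2]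
        rw [← DirectSum.lof_eq_of ℂ, DirectSum.component.lof_self]
        rfl
      · rw [h2 p q hqp.symm (y : M) y.2, ← DirectSum.lof_eq_of ℂ, DirectSum.component.of,
          dif_neg hqp]
        simp
    have hx2 : ((x p : M)) = ρ p (DirectSum.coeLinearMap gr x) := LinearMap.congr_fun key x
    rw [hx', map_zero] at hx2
    simpa using hx2
  · intro m
    obtain ⟨x, hx⟩ := coeLinearMap_surj gr h3 m
    exact ⟨x, by rw [hcoe]; exact hx⟩

end Proj

/-! #### Relations in the algebra `A(k)` -/

section AkAlg

variable (k : ℕ)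

theorem eA_mul_self (v : Gk k) : eA k v * eA k v = eA k v := by
  simpa [eA, map_mul] using RingQuot.mkAlgHom_rel ℂ (AkRel.idem (k := k) v)

theorem eA_mul_ne {v w : Gk k} (h : v ≠ w) : eA k v * eA k w = 0 := by
  simpa [eA, map_mul] using RingQuot.mkAlgHom_rel ℂ (AkRel.orth (k := k) v w h)

theorem sum_eA : ∑ v : Gk k, eA k v = 1 := by
  simpa [eA, map_sum] using RingQuot.mkAlgHom_rel ℂ (AkRel.unit (k := k))

theorem aA_mul_eA (i : Fin k) (v : Gk k) : aA k i v * eA k v = aA k i v := by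
  simpa [eA, aA, map_mul] using RingQuot.mkAlgHom_rel ℂ (AkRel.src (k := k) i v)

theorem eA_mul_aA (i : Fin k) (v : Gk k) :
    eA k (v + deltaG k i) * aA k i v = aA k i v := by
  simpa [eA, aA, map_mul] using RingQuot.mkAlgHom_rel ℂ (AkRel.tgt (k := k) i v)

theorem aA_comm (i j : Fin k) (v : Gk k) :
    aA k i (v + deltaG k j) * aA k j v = aA k j (v + deltaG k i) * aA k i v := by
  simpa [eA, aA, map_mul] using RingQuot.mkAlgHom_rel ℂ (AkRel.comm (k := k) i j v)

theorem aA_mul_eA_ne {i : Fin k} {v w : Gk k} (h : v ≠ w) : aA k i v * eA k w = 0 := by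
  rw [← aA_mul_eA k i v, mul_assoc, eA_mul_ne k h, mul_zero]

theorem aA_mul_aA_ne (i j : Fin k) {v w : Gk k} (h : v ≠ w + deltaG k j) :
    aA k i v * aA k j w = 0 := by
  rw [← eA_mul_aA k j w, ← mul_assoc, aA_mul_eA_ne k h, zero_mul]

/-- The image in `A(k)` of the variable `x i`: the sum of all arrows of color `i`. -/
def XS (i : Fin k) : Ak k := ∑ v : Gk k, aA k i v

theorem XS_mul_eA (i : Fin k) (v : Gk k) : XS k i * eA k v = aA k i v := by
  rw [XS, Finset.sum_mul]
  rw [Finset.sum_eq_single v (fun w _ hw => aA_mul_eA_ne k hw) (by simp)]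
  exact aA_mul_eA k i v

theorem XS_mul_aA (i j : Fin k) (w : Gk k) :
    XS k i * aA k j w = aA k i (w + deltaG k j) * aA k j w := by
  rw [XS, Finset.sum_mul]
  exact Finset.sum_eq_single (w + deltaG k j) (fun v _ hv => aA_mul_aA_ne k i j hv) (by simp)

theorem XS_mul_XS (i j : Fin k) :
    XS k i * XS k j = ∑ w : Gk k, aA k i (w + deltaG k j) * aA k j w := by
  rw [show XS k j = ∑ v : Gk k, aA k j v from rfl, Finset.mul_sum]
  exact Finset.sum_congr rfl fun w _ => XS_mul_aA k i j w

theorem XS_comm (i j : Fin k) : XS k i * XS k j = XS k j * XS k i := by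
  rw [XS_mul_XS, XS_mul_XS]
  exact Finset.sum_congr rfl fun w _ => aA_comm k i j w

/-- The algebra map `ℂ[x_1,…,x_k] → A(k)`, `x i ↦ XS k i`. -/
def phi : Pk k →ₐ[ℂ] Ak k :=
  letI : CommRing (Algebra.adjoin ℂ (Set.range (XS k))) :=
    Algebra.adjoinCommRingOfComm ℂ (by
      rintro a ⟨i, rfl⟩ b ⟨j, rfl⟩; exact XS_comm k i j)
  ((Algebra.adjoin ℂ (Set.range (XS k))).val).comp
    (MvPolynomial.aeval fun i =>
      (⟨XS k i, Algebra.subset_adjoin (Set.mem_range_self i)⟩ :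
        Algebra.adjoin ℂ (Set.range (XS k))))

theorem phi_X (i : Fin k) : phi k (MvPolynomial.X i) = XS k i := by
  simp [phi]

end AkAlg

/-! #### The functor `F : GrAkMod ⥤ GrPolyMod` -/

section Fdir

variable {k : ℕ}

/-- Action of the idempotent `e v` as a `ℂ`-linear endomorphism. -/
def EA (X : GrAkMod k) (v : Gk k) : X.M →ₗ[ℂ] X.M := Algebra.lsmul ℂ ℂ X.M (eA k v)

theorem EA_apply (X : GrAkMod k) (v : Gk k) (m : X.M) : EA X v m = eA k v • m := rfl

/-- The `(G_k × ℤ)`-grading on a `ℤ`-graded `A(k)`-module. -/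
def grF (X : GrAkMod k) (p : Gk k × ℤ) : Submodule ℂ X.M :=
  (X.gr p.2).map (EA X p.1)

theorem grF_le (X : GrAkMod k) (p : Gk k × ℤ) : grF X p ≤ X.gr p.2 := by
  rintro m ⟨m₀, h0, rfl⟩
  exact X.compat_e p.1 p.2 m₀ h0

theorem mem_grF_of (X : GrAkMod k) (v : Gk k) (n : ℤ) {m : X.M} (hm : m ∈ X.gr n) :
    eA k v • m ∈ grF X (v, n) :=
  ⟨m, hm, rfl⟩

theorem EA_of_grF (X : GrAkMod k) {v : Gk k} {n : ℤ} {m : X.M} (hm : m ∈ grF X (v, n)) :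
    EA X v m = m := by
  obtain ⟨m₀, h0, rfl⟩ := hm
  show eA k v • EA X v m₀ = EA X v m₀
  rw [EA_apply, smul_smul, eA_mul_self]

theorem EA_of_grF_ne (X : GrAkMod k) {v w : Gk k} {n : ℤ} (h : w ≠ v) {m : X.M}
    (hm : m ∈ grF X (v, n)) : EA X w m = 0 := by
  obtain ⟨m₀, h0, rfl⟩ := hm
  show eA k w • EA X v m₀ = 0
  rw [EA_apply, smul_smul, eA_mul_ne k h, zero_smul]

theorem sum_EA (X : GrAkMod k) (m : X.M) : ∑ v : Gk k, EA X v m = m := by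
  have : ∑ v : Gk k, eA k v • m = (∑ v : Gk k, eA k v) • m := (Finset.sum_smul).symm
  simp only [EA_apply]
  rw [this, sum_eA, one_smul]

theorem grF_internal (X : GrAkMod k) : DirectSum.IsInternal (grF X) := by
  refine isInternal_of_projections _ (fun p => EA X p.1 ∘ₗ fproj X.gr X.internal id p.2)
    ?_ ?_ ?_
  · rintro ⟨v, n⟩ m hm
    have hm' : m ∈ X.gr n := grF_le X (v, n) hm
    simp only [LinearMap.comp_apply]
    rw [fproj_of_mem X.gr X.internal id n hm']
    simp only [id_eq, if_pos]
    exact EA_of_grF X hm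
  · rintro ⟨v, n⟩ ⟨w, n'⟩ hne m hm
    have hm' : m ∈ X.gr n' := grF_le X (w, n') hm
    simp only [LinearMap.comp_apply]
    rcases eq_or_ne n' n with rfl | hn
    · rw [fproj_of_mem X.gr X.internal id n' hm']
      simp only [id_eq, if_pos]
      refine EA_of_grF_ne X (fun hvw => hne (by rw [hvw])) hm
    · rw [fproj_of_mem X.gr X.internal id n hm', if_neg (show ¬ (id n' = n) from hn), map_zero]
  · rw [eq_top_iff]
    intro m _
    have hm : m ∈ ⨆ n, X.gr n := by rw [X.internal.submodule_iSup_eq_top]; trivial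
    refine Submodule.iSup_induction (motive := fun m => m ∈ ⨆ p, grF X p) _ hm ?_ ?_ ?_
    · intro n m hmn
      have : m = ∑ v : Gk k, eA k v • m := by
        simp only [← EA_apply]; rw [sum_EA]
      rw [this]
      exact Submodule.sum_mem _ fun v _ => le_iSup (grF X) (v, n) (mem_grF_of X v n hmn)
    · exact Submodule.zero_mem _
    · intro x y hx hy; exact Submodule.add_mem _ hx hy

/-- The object part of the functor `F`. -/
def Fobj (X : GrAkMod k) : GrPolyMod k :=
  letI modP : Module (Pk k) X.M := Module.compHom X.M (phi k).toRingHom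
  { M := X.M
    acg := X.acg
    modC := X.modC
    modP := modP
    tower := ⟨fun c p m => by
      show phi k (c • p) • m = c • (phi k p • m)
      rw [map_smul]
      exact smul_assoc c (phi k p) m⟩
    gr := grF X
    internal := grF_internal X
    compat := by
      intro i g n m hm
      obtain ⟨m₀, h0, rfl⟩ := hm
      show phi k (MvPolynomial.X i) • (eA k g • m₀) ∈ grF X (g + deltaG k i, n + 1)
      rw [phi_X, smul_smul, XS_mul_eA, ← eA_mul_aA, ← smul_smul]
      exact mem_grF_of X _ _ (X.compat_a i g n m₀ h0) }

/-- The morphism part of the functor `F`. -/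
def Fmap {X Y : GrAkMod k} (f : X ⟶ Y) : Fobj X ⟶ Fobj Y :=
  ⟨{ toFun := f.1
     map_add' := f.1.map_add
     map_smul' := fun p m => f.1.map_smul (phi k p) m },
   by
     rintro ⟨v, n⟩ m ⟨m₀, h0, rfl⟩
     exact ⟨f.1 m₀, f.2 n m₀ h0, (f.1.map_smul (eA k v) m₀).symm⟩⟩

/-- The functor `F : GrAkMod ⥤ GrPolyMod`. -/
def FF (k : ℕ) : GrAkMod k ⥤ GrPolyMod k where
  obj := Fobj
  map := Fmap
  map_id _ := Subtype.ext (LinearMap.ext fun _ => rfl)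
  map_comp _ _ := Subtype.ext (LinearMap.ext fun _ => rfl)

end Fdir

/-! #### The functor `G : GrPolyMod ⥤ GrAkMod` -/

section Gdir

variable {k : ℕ}

/-- Projection onto the `v`-component of the `G_k`-grading. -/
def Pv (Y : GrPolyMod k) (v : Gk k) : Y.M →ₗ[ℂ] Y.M :=
  fproj Y.gr Y.internal Prod.fst v

/-- Multiplication by `x i` as a `ℂ`-linear endomorphism. -/
def Lx (Y : GrPolyMod k) (i : Fin k) : Y.M →ₗ[ℂ] Y.M :=
  Algebra.lsmul ℂ ℂ Y.M (MvPolynomial.X i : Pk k)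

theorem Lx_apply (Y : GrPolyMod k) (i : Fin k) (m : Y.M) :
    Lx Y i m = (MvPolynomial.X i : Pk k) • m := rfl

theorem Pv_of_mem (Y : GrPolyMod k) {v w : Gk k} {n : ℤ} {m : Y.M}
    (hm : m ∈ Y.gr (w, n)) : Pv Y v m = if w = v then m else 0 :=
  fproj_of_mem Y.gr Y.internal Prod.fst v hm

theorem sum_Pv (Y : GrPolyMod k) : ∑ v : Gk k, Pv Y v = LinearMap.id :=
  fproj_sum Y.gr Y.internal Prod.fst

/-- The defining representation of the free algebra on the generators. -/
def rhoF (Y : GrPolyMod k) : FAk k →ₐ[ℂ] Module.End ℂ Y.M :=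
  FreeAlgebra.lift ℂ fun g => match g with
    | .e v => Pv Y v
    | .a i v => Lx Y i ∘ₗ Pv Y v

theorem rhoF_e (Y : GrPolyMod k) (v : Gk k) : rhoF Y (eF k v) = Pv Y v := by
  simp [rhoF, eF]

theorem rhoF_a (Y : GrPolyMod k) (i : Fin k) (v : Gk k) :
    rhoF Y (aF k i v) = Lx Y i ∘ₗ Pv Y v := by
  simp [rhoF, aF]

theorem rhoF_rel (Y : GrPolyMod k) {x y : FAk k} (h : AkRel k x y) : rhoF Y x = rhoF Y y := by
  induction h with
  | idem v =>
    refine ext_of_internal Y.gr Y.internal ?_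
    rintro ⟨w, n⟩ m hm
    simp only [map_mul, rhoF_e, Module.End.mul_apply]
    rw [Pv_of_mem Y hm]
    split_ifs with h
    · subst h; rw [Pv_of_mem Y hm, if_pos rfl]
    · rw [map_zero]
  | orth v w hvw =>
    refine ext_of_internal Y.gr Y.internal ?_
    rintro ⟨u, n⟩ m hm
    simp only [map_mul, rhoF_e, map_zero, Module.End.mul_apply, LinearMap.zero_apply]
    rw [Pv_of_mem Y hm]
    split_ifs with h
    · subst h; rw [Pv_of_mem Y hm, if_neg fun hh => hvw hh.symm]
    · rw [map_zero]
  | unit =>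
    rw [map_sum, map_one]
    simp only [rhoF_e]
    rw [sum_Pv]
    rfl
  | src i v =>
    refine ext_of_internal Y.gr Y.internal ?_
    rintro ⟨w, n⟩ m hm
    simp only [map_mul, rhoF_e, rhoF_a, Module.End.mul_apply, LinearMap.comp_apply]
    rw [Pv_of_mem Y hm]
    split_ifs with h
    · subst h; rw [Pv_of_mem Y hm, if_pos rfl]
    · rw [map_zero]
  | tgt i v =>
    refine ext_of_internal Y.gr Y.internal ?_
    rintro ⟨w, n⟩ m hm
    simp only [map_mul, rhoF_e, rhoF_a, Module.End.mul_apply, LinearMap.comp_apply]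
    rw [Pv_of_mem Y hm]
    split_ifs with h
    · subst h
      have hx : Lx Y i m ∈ Y.gr (w + deltaG k i, n + 1) := Y.compat i w n m hm
      rw [Pv_of_mem Y hx, if_pos rfl]
    · rw [map_zero, map_zero]
  | comm i j v =>
    refine ext_of_internal Y.gr Y.internal ?_
    rintro ⟨w, n⟩ m hm
    simp only [map_mul, rhoF_a, Module.End.mul_apply, LinearMap.comp_apply]
    rw [Pv_of_mem Y hm]
    split_ifs with h
    · subst h
      have hj : Lx Y j m ∈ Y.gr (w + deltaG k j, n + 1) := Y.compat j w n m hm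
      have hi : Lx Y i m ∈ Y.gr (w + deltaG k i, n + 1) := Y.compat i w n m hm
      rw [Pv_of_mem Y hj, if_pos rfl, Pv_of_mem Y hi, if_pos rfl]
      simp only [Lx_apply, smul_smul]
      rw [mul_comm]
    · simp

/-- The representation of `A(k)` attached to a graded polynomial module. -/
def rho (Y : GrPolyMod k) : Ak k →ₐ[ℂ] Module.End ℂ Y.M :=
  RingQuot.liftAlgHom ℂ ⟨rhoF Y, fun _ _ h => rhoF_rel Y h⟩

theorem rho_mk (Y : GrPolyMod k) (x : FAk k) :
    rho Y (RingQuot.mkAlgHom ℂ (AkRel k) x) = rhoF Y x :=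
  RingQuot.liftAlgHom_mkAlgHom_apply _ _ _ _

theorem rho_e (Y : GrPolyMod k) (v : Gk k) : rho Y (eA k v) = Pv Y v := by
  rw [eA, rho_mk, rhoF_e]

theorem rho_a (Y : GrPolyMod k) (i : Fin k) (v : Gk k) :
    rho Y (aA k i v) = Lx Y i ∘ₗ Pv Y v := by
  rw [aA, rho_mk, rhoF_a]

/-- The object part of the functor `G`. -/
def Gobj (Y : GrPolyMod k) : GrAkMod k :=
  letI modA : Module (Ak k) Y.M := Module.compHom Y.M (rho Y).toRingHom
  { M := Y.M
    acg := Y.acg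
    modC := Y.modC
    modA := modA
    tower := ⟨fun c a m => by
      show rho Y (c • a) m = c • rho Y a m
      rw [map_smul]
      rfl⟩
    gr := fun n => ⨆ v : Gk k, Y.gr (v, n)
    internal := by
      refine isInternal_of_projections _ (fun n => fproj Y.gr Y.internal Prod.snd n) ?_ ?_ ?_
      · intro n m hm
        refine Submodule.iSup_induction (motive := fun m => fproj Y.gr Y.internal Prod.snd n m = m)
          _ hm ?_ (by simp) ?_
        · intro v m hmv
          rw [fproj_of_mem Y.gr Y.internal Prod.snd n hmv, if_pos rfl]
        · intro x y hx hy; rw [map_add, hx, hy]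
      · intro n n' hne m hm
        refine Submodule.iSup_induction (motive := fun m => fproj Y.gr Y.internal Prod.snd n m = 0)
          _ hm ?_ (by simp) ?_
        · intro v m hmv
          rw [fproj_of_mem Y.gr Y.internal Prod.snd n hmv, if_neg (fun h => hne h.symm)]
        · intro x y hx hy; rw [map_add, hx, hy, add_zero]
      · rw [← Y.internal.submodule_iSup_eq_top, iSup_prod]
        exact (iSup_comm).symm
    compat_e := by
      intro v n m hm
      show rho Y (eA k v) m ∈ ⨆ w : Gk k, Y.gr (w, n)
      rw [rho_e]
      refine Submodule.iSup_induction (motive := fun m => Pv Y v m ∈ ⨆ w : Gk k, Y.gr (w, n))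
        _ hm ?_ (by simp) ?_
      · intro w m hmw
        try dsimp only
        rw [Pv_of_mem Y hmw]
        split_ifs with h
        · subst h; exact le_iSup (fun w => Y.gr (w, n)) w hmw
        · exact Submodule.zero_mem _
      · intro x y hx hy
        try dsimp only
        rw [map_add]; exact Submodule.add_mem _ hx hy
    compat_a := by
      intro i v n m hm
      show rho Y (aA k i v) m ∈ ⨆ w : Gk k, Y.gr (w, n + 1)
      rw [rho_a]
      refine Submodule.iSup_induction
        (motive := fun m => (Lx Y i ∘ₗ Pv Y v) m ∈ ⨆ w : Gk k, Y.gr (w, n + 1))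
        _ hm ?_ (by simp) ?_
      · intro w m hmw
        try dsimp only
        rw [LinearMap.comp_apply, Pv_of_mem Y hmw]
        split_ifs with h
        · subst h
          exact le_iSup (fun u => Y.gr (u, n + 1)) (w + deltaG k i) (Y.compat i w n m hmw)
        · rw [map_zero]; exact Submodule.zero_mem _
      · intro x y hx hy
        try dsimp only
        rw [map_add]; exact Submodule.add_mem _ hx hy }

/-- `f` commutes with the fiber projections. -/
theorem map_Pv {Y Z : GrPolyMod k} (f : Y ⟶ Z) (v : Gk k) (m : Y.M) :
    f.1 (Pv Y v m) = Pv Z v (f.1 m) := by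
  have key : (f.1.restrictScalars ℂ) ∘ₗ Pv Y v = Pv Z v ∘ₗ (f.1.restrictScalars ℂ) := by
    refine ext_of_internal Y.gr Y.internal ?_
    rintro ⟨w, n⟩ m hm
    simp only [LinearMap.comp_apply, LinearMap.coe_restrictScalars]
    rw [Pv_of_mem Y hm, Pv_of_mem Z (f.2 (w, n) m hm)]
    split_ifs
    · rfl
    · rw [map_zero]
  exact LinearMap.congr_fun key m

theorem map_rho {Y Z : GrPolyMod k} (f : Y ⟶ Z) (a : Ak k) (m : Y.M) :
    f.1 (rho Y a m) = rho Z a (f.1 m) := by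
  obtain ⟨x, rfl⟩ := RingQuot.mkAlgHom_surjective ℂ (AkRel k) a
  induction x using FreeAlgebra.induction generalizing m with
  | grade0 c =>
    rw [AlgHom.commutes, (rho Y).commutes, (rho Z).commutes,
      Module.algebraMap_end_apply, Module.algebraMap_end_apply,
      ← algebraMap_smul (Pk k) c m, f.1.map_smul, algebraMap_smul]
  | grade1 g =>
    cases g with
    | e v =>
      have h : (RingQuot.mkAlgHom ℂ (AkRel k)) (FreeAlgebra.ι ℂ (AkGen.e v)) = eA k v := rfl
      rw [h, rho_e, rho_e]
      exact map_Pv f v m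
    | a i v =>
      have h : (RingQuot.mkAlgHom ℂ (AkRel k)) (FreeAlgebra.ι ℂ (AkGen.a i v)) = aA k i v := rfl
      rw [h, rho_a, rho_a]
      simp only [LinearMap.comp_apply]
      rw [Lx_apply, Lx_apply, ← map_Pv f v m]
      exact f.1.map_smul _ _
  | mul a b ha hb =>
    simp only [map_mul, Module.End.mul_apply]
    rw [ha, hb]
  | add a b ha hb =>
    simp only [map_add, LinearMap.add_apply]
    rw [ha, hb]

/-- The morphism part of the functor `G`. -/
def Gmap {Y Z : GrPolyMod k} (f : Y ⟶ Z) : Gobj Y ⟶ Gobj Z :=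
  ⟨{ toFun := f.1
     map_add' := f.1.map_add
     map_smul' := fun a m => map_rho f a m },
   by
     intro n m hm
     refine Submodule.iSup_induction (motive := fun m => f.1 m ∈ ⨆ w : Gk k, Z.gr (w, n))
       _ hm ?_ ?_ ?_
     · intro w m hmw
       exact le_iSup (fun w => Z.gr (w, n)) w (f.2 (w, n) m hmw)
     · simp
     · intro x y hx hy
       try dsimp only
       rw [map_add]; exact Submodule.add_mem _ hx hy⟩

/-- The functor `G : GrPolyMod ⥤ GrAkMod`. -/
def GG (k : ℕ) : GrPolyMod k ⥤ GrAkMod k where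
  obj := Gobj
  map := Gmap
  map_id _ := Subtype.ext (LinearMap.ext fun _ => rfl)
  map_comp _ _ := Subtype.ext (LinearMap.ext fun _ => rfl)

end Gdir

/-! #### The unit: `X ≅ G (F X)` -/

section UnitCounit

variable {k : ℕ}

theorem rho_F (X : GrAkMod k) : rho (Fobj X) = Algebra.lsmul ℂ ℂ X.M := by
  refine RingQuot.ringQuot_ext' ℂ _ _ ?_
  refine FreeAlgebra.hom_ext (funext fun g => ?_)
  cases g with
  | e v =>
    show rho (Fobj X) (eA k v) = Algebra.lsmul ℂ ℂ X.M (eA k v)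
    rw [rho_e]
    refine ext_of_internal (grF X) (grF_internal X) ?_
    rintro ⟨w, n⟩ m hm
    have h1 : Pv (Fobj X) v m = if w = v then m else 0 :=
      Pv_of_mem (Fobj X) (show m ∈ (Fobj X).gr (w, n) from hm)
    have h2 : EA X v m = if w = v then m else 0 := by
      split_ifs with h
      · subst h; exact EA_of_grF X hm
      · exact EA_of_grF_ne X (Ne.symm h) hm
    exact h1.trans h2.symm
  | a i v =>
    show rho (Fobj X) (aA k i v) = Algebra.lsmul ℂ ℂ X.M (aA k i v)
    rw [rho_a]
    refine ext_of_internal (grF X) (grF_internal X) ?_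
    rintro ⟨w, n⟩ m hm
    have h1 : (Lx (Fobj X) i ∘ₗ Pv (Fobj X) v) m
        = if w = v then Lx (Fobj X) i m else 0 := by
      show Lx (Fobj X) i (Pv (Fobj X) v m) = _
      rw [Pv_of_mem (Fobj X) (show m ∈ (Fobj X).gr (w, n) from hm)]
      split_ifs with h
      · simp [h]
      · simp [h]
    have h2 : Lx (Fobj X) i m = XS k i • m := by
      show phi k (MvPolynomial.X i) • m = XS k i • m
      rw [phi_X]
    obtain ⟨m₀, h0, rfl⟩ := hm
    have h3 : (if w = v then Lx (Fobj X) i (EA X w m₀) else 0)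
        = aA k i v • EA X w m₀ := by
      split_ifs with h
      · subst h
        rw [h2, EA_apply, smul_smul, XS_mul_eA, smul_smul, aA_mul_eA]
      · rw [EA_apply, smul_smul, aA_mul_eA_ne k (Ne.symm h), zero_smul]; rfl
    exact h1.trans h3

theorem rho_F_apply (X : GrAkMod k) (a : Ak k) (m : X.M) :
    rho (Fobj X) a m = a • m := by
  rw [rho_F]; rfl

theorem grGF (X : GrAkMod k) (n : ℤ) :
    (⨆ v : Gk k, grF X (v, n)) = X.gr n := by
  refine le_antisymm (iSup_le fun v => grF_le X (v, n)) ?_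
  intro m hm
  have hsum : m = ∑ v : Gk k, EA X v m := (sum_EA X m).symm
  rw [hsum]
  exact Submodule.sum_mem _ fun v _ =>
    le_iSup (fun v => grF X (v, n)) v (mem_grF_of X v n hm)

/-- The unit isomorphism at `X`. -/
def unitApp (X : GrAkMod k) : X ≅ (FF k ⋙ GG k).obj X where
  hom := ⟨{ toFun := id
            map_add' := fun _ _ => rfl
            map_smul' := fun a m => (rho_F_apply X a m).symm },
          fun n m hm => by
            show m ∈ ⨆ v : Gk k, grF X (v, n)
            rw [grGF X n]; exact hm⟩
  inv := ⟨{ toFun := id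
            map_add' := fun _ _ => rfl
            map_smul' := fun a m => rho_F_apply X a m },
          fun n m hm => by
            have hm' : m ∈ ⨆ v : Gk k, grF X (v, n) := hm
            rw [grGF X n] at hm'
            exact hm'⟩
  hom_inv_id := Subtype.ext (LinearMap.ext fun _ => rfl)
  inv_hom_id := Subtype.ext (LinearMap.ext fun _ => rfl)

/-! #### The counit: `F (G Y) ≅ Y` -/

theorem rho_phi (Y : GrPolyMod k) : (rho Y).comp (phi k) = Algebra.lsmul ℂ ℂ Y.M := by
  refine MvPolynomial.algHom_ext fun i => ?_
  rw [AlgHom.comp_apply, phi_X]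
  show rho Y (XS k i) = Lx Y i
  rw [XS, map_sum]
  simp only [rho_a]
  refine LinearMap.ext fun m => ?_
  rw [LinearMap.sum_apply]
  simp only [LinearMap.comp_apply]
  rw [← map_sum]
  have hs : ∑ v : Gk k, Pv Y v m = m := by
    rw [← LinearMap.sum_apply, sum_Pv]; rfl
  rw [hs]

theorem rho_phi_apply (Y : GrPolyMod k) (p : Pk k) (m : Y.M) :
    rho Y (phi k p) m = p • m := by
  have h := AlgHom.congr_fun (rho_phi Y) p
  exact LinearMap.congr_fun h m

theorem grFG (Y : GrPolyMod k) (p : Gk k × ℤ) : grF (Gobj Y) p = Y.gr p := by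
  obtain ⟨v, n⟩ := p
  have hEA : ∀ m : Y.M, EA (Gobj Y) v m = Pv Y v m := fun m => by
    show rho Y (eA k v) m = Pv Y v m
    rw [rho_e]
  refine le_antisymm ?_ ?_
  · rintro m ⟨m₀, h0, rfl⟩
    rw [hEA m₀]
    refine Submodule.iSup_induction (motive := fun m => Pv Y v m ∈ Y.gr (v, n)) _ h0 ?_ ?_ ?_
    · intro w m hmw
      try dsimp only
      rw [Pv_of_mem Y hmw]
      split_ifs with h
      · subst h; exact hmw
      · exact Submodule.zero_mem _
    · simp
    · intro x y hx hy
      try dsimp only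
      rw [map_add]; exact Submodule.add_mem _ hx hy
  · intro m hm
    refine ⟨m, le_iSup (fun w => Y.gr (w, n)) v hm, ?_⟩
    rw [hEA m, Pv_of_mem Y hm]; exact if_pos rfl

/-- The counit isomorphism at `Y`. -/
def counitApp (Y : GrPolyMod k) : (GG k ⋙ FF k).obj Y ≅ Y where
  hom := ⟨{ toFun := id
            map_add' := fun _ _ => rfl
            map_smul' := fun p m => rho_phi_apply Y p m },
          fun p m hm => by
            have hm' : m ∈ grF (Gobj Y) p := hm
            rw [grFG Y p] at hm'
            exact hm'⟩
  inv := ⟨{ toFun := id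
            map_add' := fun _ _ => rfl
            map_smul' := fun p m => (rho_phi_apply Y p m).symm },
          fun p m hm => by
            show m ∈ grF (Gobj Y) p
            rw [grFG Y p]; exact hm⟩
  hom_inv_id := Subtype.ext (LinearMap.ext fun _ => rfl)
  inv_hom_id := Subtype.ext (LinearMap.ext fun _ => rfl)

/-- The unit natural isomorphism. -/
def unitIso (k : ℕ) : 𝟭 (GrAkMod k) ≅ FF k ⋙ GG k :=
  NatIso.ofComponents unitApp fun _ => Subtype.ext (LinearMap.ext fun _ => rfl)

/-- The counit natural isomorphism. -/
def counitIso (k : ℕ) : GG k ⋙ FF k ≅ 𝟭 (GrPolyMod k) :=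
  NatIso.ofComponents counitApp fun _ => Subtype.ext (LinearMap.ext fun _ => rfl)

end UnitCounit

end AkEquivProof

end AkEquivProof

/-- the category of ℤ-graded `A(k)`-modules is equivalent to the
category of `(G_k × ℤ)`-graded modules over the polynomial ring `ℂ[x_1,...,x_k]`
with `deg x_i = (δ i, 1)`. -/
theorem graded_Ak_equiv_graded_poly (k : ℕ) :
    Nonempty (GrAkMod k ≌ GrPolyMod k) := by
  exact ⟨CategoryTheory.Equivalence.mk (AkEquivProof.FF k) (AkEquivProof.GG k)
    (AkEquivProof.unitIso k) (AkEquivProof.counitIso k)⟩
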